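/- Let r_1,…,r_k ≥ 0, and let J ⊂ ℂ[h_1,…,h_k] be the ideal generated by the polynomials J_{R_a}(h_1,…,h_k) − r_a for a = 1,…,k, where s_{R_a} = J_{R_a}(h_1,…,h_k) expresses the rectangular Schur function via Jacobi–Trudi. Then the affine algebraic variety 𝓡 ⊂ ℂ^k defined by J is finite. -/

import Mathlib

open MvPolynomial

/-- `h_n` over `ℂ`, with `ℂ[h_1,…,h_k]` modelled as `MvPolynomial (Fin k) ℂ`
and `X i = h_{i+1}`: `h_0 = 1`, `h_n = X (n-1)` for `1 ≤ n ≤ k`, `0` otherwise. -/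
noncomputable def hsymC (k : ℕ) (n : ℤ) : MvPolynomial (Fin k) ℂ :=
  if hn : 0 < n ∧ n ≤ (k : ℤ) then X ⟨(n - 1).toNat, by omega⟩
  else if n = 0 then 1 else 0

/-- The rectangle Schur polynomial `J_{R_{a+1}}(h_1,…,h_k)`, `R_b = ((k-b+1)^b)`,
given by the Jacobi-Trudi determinant, as a polynomial in `h_1,…,h_k` over `ℂ`. -/
noncomputable def sRC (k : ℕ) (a : Fin k) : MvPolynomial (Fin k) ℂ :=
  (Matrix.of fun i j : Fin (a.val + 1) =>
    hsymC k ((((k : ℤ) - a.val) - i.val) + j.val)).det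

namespace RectAux

/-- Integer weights: the variable `X i` (representing `h_{i+1}`) has weight `i+1`. -/
def w (k : ℕ) : Fin k → ℤ := fun i => (i : ℤ) + 1

/-- The weighted degree of the rectangle Schur polynomial `sRC k a`. -/
def D (k : ℕ) (a : Fin k) : ℤ := ((a : ℤ) + 1) * ((k : ℤ) - (a : ℤ))

lemma D_pos (k : ℕ) (a : Fin k) : 0 < D k a := by
  have := a.isLt
  have h1 : (0 : ℤ) < (a : ℤ) + 1 := by positivity
  have h2 : (0 : ℤ) < (k : ℤ) - (a : ℤ) := by omega
  exact mul_pos h1 h2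

lemma hsymC_homog (k : ℕ) (n : ℤ) : IsWeightedHomogeneous (w k) (hsymC k n) n := by
  unfold hsymC
  split_ifs with h1 h2
  · have := isWeightedHomogeneous_X ℂ (w k) (⟨(n - 1).toNat, by omega⟩ : Fin k)
    convert this using 1
    simp only [w]
    omega
  · subst h2
    exact isWeightedHomogeneous_one ℂ (w k)
  · exact isWeightedHomogeneous_zero ℂ (w k) n

lemma sRC_homog (k : ℕ) (a : Fin k) : IsWeightedHomogeneous (w k) (sRC k a) (D k a) := by
  classical
  rw [sRC, Matrix.det_apply']
  apply IsWeightedHomogeneous.sum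
  intro σ _
  have hprod : IsWeightedHomogeneous (w k)
      (∏ i : Fin (a.val + 1),
        (Matrix.of fun i j : Fin (a.val + 1) =>
          hsymC k ((((k : ℤ) - a.val) - i.val) + j.val)) (σ i) i)
      (∑ i : Fin (a.val + 1), ((((k : ℤ) - a.val) - ((σ i).val : ℤ)) + (i.val : ℤ))) := by
    apply IsWeightedHomogeneous.prod
    intro i _
    exact hsymC_homog k _
  have hsum : (∑ i : Fin (a.val + 1), ((((k : ℤ) - a.val) - ((σ i).val : ℤ)) + (i.val : ℤ)))
      = D k a := by
    rw [Finset.sum_add_distrib, Finset.sum_sub_distrib]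
    rw [Equiv.sum_comp σ (fun i : Fin (a.val + 1) => ((i : ℕ) : ℤ))]
    simp only [Finset.sum_const, Finset.card_univ, Fintype.card_fin, nsmul_eq_mul, D]
    push_cast
    ring
  rw [hsum] at hprod
  have hC : (((Equiv.Perm.sign σ : ℤ) : MvPolynomial (Fin k) ℂ))
      = C (((Equiv.Perm.sign σ : ℤ) : ℂ)) := by
    rw [map_intCast]
  rw [hC]
  have := (isWeightedHomogeneous_C (w k) (((Equiv.Perm.sign σ : ℤ) : ℂ))).mul hprod
  simpa using this

/-- If all rectangle Schur polynomials vanish at `x`, then `x = 0`. -/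
lemma eq_zero_of_eval_sRC_eq_zero {k : ℕ} (x : Fin k → ℂ)
    (h : ∀ a : Fin k, eval x (sRC k a) = 0) : x = 0 := by
  classical
  by_contra hx
  have hne : (Finset.univ.filter (fun i : Fin k => x i ≠ 0)).Nonempty := by
    rcases Function.ne_iff.mp hx with ⟨i, hi⟩
    exact ⟨i, by simp only [Finset.mem_filter, Finset.mem_univ, true_and]; exact hi⟩
  set T := Finset.univ.filter (fun i : Fin k => x i ≠ 0) with hT
  set j := T.max' hne with hj
  have hxj : x j ≠ 0 := by
    have := T.max'_mem hne
    simpa [hT] using this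
  have hgt : ∀ i : Fin k, j < i → x i = 0 := by
    intro i hi
    by_contra hxi
    exact absurd (T.le_max' i (by simp [hT, hxi])) (not_le.mpr hi)
  have hjk : (j : ℕ) < k := j.isLt
  set a : Fin k := ⟨k - 1 - (j : ℕ), by omega⟩ with ha
  have hka : ((k : ℤ) - (a.val : ℤ)) = (j : ℤ) + 1 := by
    have : a.val = k - 1 - (j : ℕ) := rfl
    omega
  have hdet := h a
  rw [sRC, RingHom.map_det, RingHom.mapMatrix_apply] at hdet
  set E := ((Matrix.of fun i j' : Fin (a.val + 1) =>
      hsymC k ((((k : ℤ) - a.val) - i.val) + j'.val)).map (eval x)) with hE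
  have hEntry : ∀ i i' : Fin (a.val + 1),
      E i i' = eval x (hsymC k (((j : ℤ) + 1 - i.val) + i'.val)) := by
    intro i i'
    simp only [hE, Matrix.map_apply, Matrix.of_apply, hka]
  have htri : E.BlockTriangular OrderDual.toDual := by
    intro i i' hii'
    have hlt : (i : ℕ) < (i' : ℕ) := hii'
    rw [hEntry]
    set n : ℤ := ((j : ℤ) + 1 - i.val) + i'.val with hn
    have hn2 : (j : ℤ) + 2 ≤ n := by omega
    unfold hsymC
    split_ifs with h1 h2
    · simp only [eval_X]
      apply hgt
      rw [Fin.lt_def]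
      simp only
      omega
    · omega
    · simp
  have hdiag : ∀ i : Fin (a.val + 1), E i i = x j := by
    intro i
    rw [hEntry]
    have hcond : (0 : ℤ) < (j : ℤ) + 1 - i.val + i.val ∧ (j : ℤ) + 1 - i.val + i.val ≤ (k : ℤ) := by
      constructor <;> omega
    unfold hsymC
    rw [dif_pos hcond]
    simp only [eval_X]
    congr 1
    apply Fin.ext
    simp only
    omega
  rw [Matrix.det_of_lowerTriangular E htri] at hdet
  simp only [hdiag, Finset.prod_const, Finset.card_univ, Fintype.card_fin] at hdet
  exact hxj (pow_eq_zero_iff (Nat.succ_ne_zero _) |>.mp hdet)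

/-- Weighted homogeneous component of a product with a homogeneous factor. -/
lemma whc_mul {k : ℕ} {f g : MvPolynomial (Fin k) ℂ} {d m : ℤ}
    (hf : IsWeightedHomogeneous (w k) f d) :
    weightedHomogeneousComponent (w k) m (g * f)
      = weightedHomogeneousComponent (w k) (m - d) g * f := by
  classical
  ext c
  rw [coeff_weightedHomogeneousComponent, coeff_mul, coeff_mul]
  split_ifs with hc
  · apply Finset.sum_congr rfl
    rintro ⟨u, v⟩ huv
    have huv' : u + v = c := Finset.HasAntidiagonal.mem_antidiagonal.mp huv
    rw [coeff_weightedHomogeneousComponent]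
    by_cases hv : coeff v f = 0
    · simp [hv]
    · have hwv : Finsupp.weight (w k) v = d := hf hv
      have hu : Finsupp.weight (w k) u = m - d := by
        have hadd : Finsupp.weight (w k) u + Finsupp.weight (w k) v = m := by
          rw [← map_add, huv', hc]
        omega
      rw [if_pos hu]
  · symm
    apply Finset.sum_eq_zero
    rintro ⟨u, v⟩ huv
    have huv' : u + v = c := Finset.HasAntidiagonal.mem_antidiagonal.mp huv
    rw [coeff_weightedHomogeneousComponent]
    by_cases hv : coeff v f = 0
    · simp [hv]
    · have hwv : Finsupp.weight (w k) v = d := hf hv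
      have hu : Finsupp.weight (w k) u ≠ m - d := by
        intro hu
        apply hc
        rw [← huv', map_add, hu, hwv]
        ring
      rw [if_neg hu, zero_mul]

lemma weight_nonneg (k : ℕ) (s : Fin k →₀ ℕ) : 0 ≤ Finsupp.weight (w k) s := by
  rw [Finsupp.weight_apply, Finsupp.sum]
  apply Finset.sum_nonneg
  intro i _
  have : (0 : ℤ) ≤ w k i := by simp [w]; omega
  positivity

lemma weight_single (k : ℕ) (i : Fin k) (N : ℕ) :
    Finsupp.weight (w k) (Finsupp.single i N) = (N : ℤ) * w k i := by
  rw [Finsupp.weight_apply, Finsupp.sum_single_index]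
  · simp [nsmul_eq_mul]
  · simp

lemma quotient_finite (k : ℕ) (c : Fin k → ℂ) :
    Module.Finite ℂ
      (MvPolynomial (Fin k) ℂ ⧸ Ideal.span (Set.range fun a : Fin k => sRC k a - C (c a))) := by
  classical
  set J := Ideal.span (Set.range fun a : Fin k => sRC k a - C (c a)) with hJ
  set I := Ideal.span (Set.range fun a : Fin k => sRC k a) with hI
  -- Step 1: Nullstellensatz gives a power of each variable in `I`
  have hrad : ∀ i : Fin k, ∃ n : ℕ, X i ^ n ∈ I := by
    intro i
    have hzl : zeroLocus ℂ I ⊆ {0} := by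
      intro x hx
      have hall : ∀ a, eval x (sRC k a) = 0 := fun a =>
        hx _ (Ideal.subset_span ⟨a, rfl⟩)
      simpa using eq_zero_of_eval_sRC_eq_zero x hall
    have hX : X i ∈ vanishingIdeal ℂ (zeroLocus ℂ I) := by
      intro x hx
      have hx0 : x = 0 := hzl hx
      simp [hx0]
    rw [vanishingIdeal_zeroLocus_eq_radical] at hX
    exact hX
  choose nn hn using hrad
  set N : ℕ := (Finset.univ.sup nn) + 1 with hN
  have hN1 : 1 ≤ N := Nat.le_add_left 1 _
  have hXN : ∀ i : Fin k, X i ^ N ∈ I := by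
    intro i
    have hle : nn i ≤ N := le_trans (Finset.le_sup (Finset.mem_univ i)) (Nat.le_succ _)
    have hpow : (X i ^ N : MvPolynomial (Fin k) ℂ) = X i ^ (N - nn i) * X i ^ nn i := by
      rw [← pow_add]
      congr 1
      omega
    rw [hpow]
    exact I.mul_mem_left _ (hn i)
  -- Step 2: homogeneous representations of `X i ^ N`
  have hXh : ∀ i : Fin k,
      IsWeightedHomogeneous (w k) (X i ^ N : MvPolynomial (Fin k) ℂ) ((N : ℤ) * w k i) := by
    intro i
    rw [X_pow_eq_monomial]
    exact isWeightedHomogeneous_monomial _ _ _ (weight_single k i N)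
  have hrep : ∀ i : Fin k, ∃ G : Fin k → MvPolynomial (Fin k) ℂ,
      (∀ a, IsWeightedHomogeneous (w k) (G a) ((N : ℤ) * w k i - D k a)) ∧
      X i ^ N = ∑ a, G a * sRC k a := by
    intro i
    have hmem : (X i ^ N : MvPolynomial (Fin k) ℂ) ∈
        Submodule.span (MvPolynomial (Fin k) ℂ) (Set.range fun a : Fin k => sRC k a) := hXN i
    obtain ⟨g, hg⟩ := (Submodule.mem_span_range_iff_exists_fun _).mp hmem
    simp only [smul_eq_mul] at hg
    refine ⟨fun a => weightedHomogeneousComponent (w k) ((N : ℤ) * w k i - D k a) (g a),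
      fun a => weightedHomogeneousComponent_isWeightedHomogeneous _ _, ?_⟩
    calc X i ^ N
        = weightedHomogeneousComponent (w k) ((N : ℤ) * w k i) (X i ^ N) :=
          ((hXh i).weightedHomogeneousComponent_same).symm
      _ = weightedHomogeneousComponent (w k) ((N : ℤ) * w k i) (∑ a, g a * sRC k a) := by
          rw [hg]
      _ = ∑ a, weightedHomogeneousComponent (w k) ((N : ℤ) * w k i - D k a) (g a) * sRC k a := by
          rw [map_sum]
          exact Finset.sum_congr rfl fun a _ => whc_mul (sRC_homog k a)
  choose G hGhom hGrep using hrep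
  -- Step 3: spanning by small monomials
  set Q := Ideal.Quotient.mk J with hQ
  set Sset : Set (MvPolynomial (Fin k) ℂ) :=
    (fun s : Fin k →₀ ℕ => monomial s (1 : ℂ)) '' {s | ∀ i, s i < N} with hSset
  set W : Submodule ℂ (MvPolynomial (Fin k) ℂ ⧸ J) := Submodule.span ℂ (Q '' Sset) with hW
  have halg : ∀ (z : ℂ) (y : MvPolynomial (Fin k) ℂ), Q (C z * y) = z • Q y := by
    intro z y
    rw [← smul_eq_C_mul]
    exact map_smul (Ideal.Quotient.mkₐ ℂ J) z y
  have key : ∀ t : ℕ, ∀ s : Fin k →₀ ℕ, Finsupp.weight (w k) s ≤ (t : ℤ) →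
      Q (monomial s 1) ∈ W := by
    intro t
    induction t using Nat.strong_induction_on with
    | _ t ih =>
      intro s hs
      by_cases hsmall : ∀ i, s i < N
      · exact Submodule.subset_span ⟨monomial s 1, ⟨s, hsmall, rfl⟩, rfl⟩
      push_neg at hsmall
      obtain ⟨i, hiN⟩ := hsmall
      set s' : Fin k →₀ ℕ := s - Finsupp.single i N with hs'
      have hsplit : s = Finsupp.single i N + s' := by
        ext j
        by_cases hji : i = j
        · subst hji
          simp only [hs', Finsupp.add_apply, Finsupp.tsub_apply, Finsupp.single_eq_same]
          omega
        · simp [hs', Finsupp.tsub_apply, Finsupp.single_apply, hji]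
      have hweight : Finsupp.weight (w k) s = (N : ℤ) * w k i + Finsupp.weight (w k) s' := by
        rw [hsplit, map_add, weight_single]
      have hwi : (1 : ℤ) ≤ (N : ℤ) * w k i := by
        have h1 : (1 : ℤ) ≤ (N : ℤ) := by exact_mod_cast hN1
        have h2 : (1 : ℤ) ≤ w k i := by unfold w; omega
        nlinarith
      have ht1 : 1 ≤ t := by
        have := weight_nonneg k s'
        have := hs
        omega
      have hmon : (monomial s (1 : ℂ)) = monomial s' 1 * X i ^ N := by
        rw [X_pow_eq_monomial, monomial_mul, hsplit, mul_one, add_comm]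
      -- decomposition
      have hid : monomial s (1 : ℂ) =
          monomial s' 1 * (∑ a, G i a * (sRC k a - C (c a)))
            + ∑ a, C (c a) * (monomial s' 1 * G i a) := by
        rw [hmon, hGrep i, Finset.mul_sum, Finset.mul_sum, ← Finset.sum_add_distrib]
        apply Finset.sum_congr rfl
        intro a _
        ring
      have hfirst : Q (monomial s' 1 * (∑ a, G i a * (sRC k a - C (c a)))) = 0 := by
        rw [Ideal.Quotient.eq_zero_iff_mem]
        apply J.mul_mem_left
        apply Ideal.sum_mem
        intro a _
        exact J.mul_mem_left _ (Ideal.subset_span ⟨a, rfl⟩)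
      have hterm : ∀ a : Fin k, Q (monomial s' 1 * G i a) ∈ W := by
        intro a
        rw [as_sum (G i a), Finset.mul_sum, map_sum]
        apply Submodule.sum_mem
        intro u hu
        have hcoeff : coeff u (G i a) ≠ 0 := mem_support_iff.mp hu
        have hwu : Finsupp.weight (w k) u = (N : ℤ) * w k i - D k a := hGhom i a hcoeff
        have hmm : monomial s' (1 : ℂ) * monomial u (coeff u (G i a))
            = C (coeff u (G i a)) * monomial (s' + u) 1 := by
          rw [monomial_mul, C_mul_monomial, one_mul, mul_one]
        rw [hmm, halg]
        apply Submodule.smul_mem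
        have hwlt : Finsupp.weight (w k) (s' + u) ≤ ((t - 1 : ℕ) : ℤ) := by
          rw [map_add, hwu]
          have hD := D_pos k a
          have hws' := weight_nonneg k s'
          have hsw : (N : ℤ) * w k i + Finsupp.weight (w k) s' ≤ (t : ℤ) := by
            rw [← hweight]
            exact hs
          omega
        exact ih (t - 1) (by omega) _ hwlt
      have heq : Q (monomial s 1) = ∑ a, c a • Q (monomial s' 1 * G i a) := by
        rw [hid, map_add, hfirst, zero_add, map_sum]
        apply Finset.sum_congr rfl
        intro a _
        rw [halg]
      rw [heq]
      exact Submodule.sum_mem _ fun a _ => Submodule.smul_mem _ _ (hterm a)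
  -- Step 4: conclude
  have hWtop : W = ⊤ := by
    rw [eq_top_iff]
    rintro y -
    obtain ⟨p, rfl⟩ := Ideal.Quotient.mk_surjective (I := J) y
    rw [as_sum p, map_sum]
    apply Submodule.sum_mem
    intro u _
    have hmm : monomial u (coeff u p) = C (coeff u p) * monomial u 1 := by
      rw [C_mul_monomial, mul_one]
    rw [hmm, halg]
    apply Submodule.smul_mem
    exact key (Finsupp.weight (w k) u).toNat u (by
      have := weight_nonneg k u
      omega)
  constructor
  rw [Submodule.fg_def]
  refine ⟨Q '' Sset, ?_, hWtop ▸ rfl⟩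
  apply Set.Finite.image
  apply Set.Finite.image
  have hsub : {s : Fin k →₀ ℕ | ∀ i, s i < N} ⊆
      (fun s : Fin k →₀ ℕ => (s : Fin k → ℕ)) ⁻¹' (Set.pi Set.univ fun _ => Set.Iio N) := by
    intro s hsmem
    intro i _
    exact hsmem i
  apply Set.Finite.subset _ hsub
  apply Set.Finite.preimage (Set.injOn_of_injective (DFunLike.coe_injective))
  exact Set.Finite.pi fun _ => Set.finite_Iio N

end RectAux

/-- for any `r_1,…,r_k ≥ 0`, the affine algebraic variety
`𝓡 ⊂ ℂ^k` cut out by the equations `J_{R_a}(h_1,…,h_k) = r_a`, `a = 1,…,k`,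
is finite. -/
theorem rectangle_variety_finite (k : ℕ) (r : Fin k → ℝ) (hr : ∀ a, 0 ≤ r a) :
    {x : Fin k → ℂ | ∀ a : Fin k, MvPolynomial.eval x (sRC k a) = (r a : ℂ)}.Finite := by
  classical
  set c : Fin k → ℂ := fun a => (r a : ℂ) with hc
  set J : Ideal (MvPolynomial (Fin k) ℂ) :=
    Ideal.span (Set.range fun a : Fin k => sRC k a - C (c a)) with hJ
  haveI : Module.Finite ℂ (MvPolynomial (Fin k) ℂ ⧸ J) := RectAux.quotient_finite k c
  haveI : Algebra.IsIntegral ℂ (MvPolynomial (Fin k) ℂ ⧸ J) := Algebra.IsIntegral.of_finite _ _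
  -- for each i, pick a monic polynomial annihilating the class of `X i`
  have hint : ∀ i : Fin k, ∃ p : Polynomial ℂ, p.Monic ∧
      Polynomial.aeval (Ideal.Quotient.mk J (X i)) p = 0 := by
    intro i
    obtain ⟨p, hp, hp0⟩ := Algebra.IsIntegral.isIntegral (R := ℂ)
      (Ideal.Quotient.mk J (X i))
    exact ⟨p, hp, hp0⟩
  choose p hpmonic hproot using hint
  apply Set.Finite.subset (Set.Finite.pi (fun i : Fin k => (p i).rootSet_finite ℂ))
  intro x hx
  -- `x` gives an algebra hom from the quotient
  have haev : ∀ q : MvPolynomial (Fin k) ℂ, (aeval x : MvPolynomial (Fin k) ℂ →ₐ[ℂ] ℂ) q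
      = eval x q := by
    intro q
    rfl
  have hker : ∀ q ∈ J, (aeval x : MvPolynomial (Fin k) ℂ →ₐ[ℂ] ℂ) q = 0 := by
    intro q hq
    have hle : J ≤ RingHom.ker ((aeval x : MvPolynomial (Fin k) ℂ →ₐ[ℂ] ℂ) :
        MvPolynomial (Fin k) ℂ →+* ℂ) := by
      rw [hJ, Ideal.span_le]
      rintro _ ⟨a, rfl⟩
      simp only [SetLike.mem_coe, RingHom.mem_ker, RingHom.coe_coe, map_sub, aeval_C]
      rw [haev, hx a]
      simp [hc, Algebra.algebraMap_self]
    exact hle hq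
  set ψ : (MvPolynomial (Fin k) ℂ ⧸ J) →ₐ[ℂ] ℂ := Ideal.Quotient.liftₐ J (aeval x) hker with hψ
  intro i _
  rw [Polynomial.mem_rootSet]
  refine ⟨(hpmonic i).ne_zero, ?_⟩
  have hXi : ψ (Ideal.Quotient.mk J (X i)) = x i := by
    rw [hψ, Ideal.Quotient.liftₐ_apply]
    erw [Ideal.Quotient.lift_mk]
    simp [haev]
  calc Polynomial.aeval (x i) (p i)
      = ψ (Polynomial.aeval (Ideal.Quotient.mk J (X i)) (p i)) := by
        rw [← hXi, Polynomial.aeval_algHom_apply]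
    _ = 0 := by rw [hproot i, map_zero]
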